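/- arXiv:2512.12835 — 2 statements merged into one kernel-verified Lean document; each statement's English description precedes it below -/
import Mathlib

section
/- Suppose U and W are ultrafilters on an ordinal κ, I ∈ W, and ⟨U_ξ : ξ ∈ I⟩ is a family of ultrafilters where each U_ξ is an ultrafilter on P(ξ) (concentrating on ξ), such that for every X ⊆ κ, X ∈ U if and only if {ξ ∈ I : X ∩ ξ ∈ U_ξ} ∈ W. Then the function f : P(κ) → P(κ) defined by f(X) = {ξ ∈ I : X ∩ ξ ∈ U_ξ} is super-Lipschitz and satisfies f⁻¹[W] = U; in particular U is super-Lipschitz reducible to W. -/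
/-- A function `f : P(κ) → P(κ)` is super-Lipschitz if for every `ξ < κ` and every `A ⊆ κ`,
`f(A) ∩ (ξ+1) = f(A ∩ ξ) ∩ (ξ+1)`. -/
def SuperLipschitz (κ : Ordinal) (f : Set Ordinal → Set Ordinal) : Prop :=
  ∀ ξ < κ, ∀ A : Set Ordinal,
    f A ∩ Set.Iio (ξ + 1) = f (A ∩ Set.Iio ξ) ∩ Set.Iio (ξ + 1)

/-- `W` is an ultrafilter on `P(κ)`. -/
def IsUltrafilterOn (κ : Ordinal) (W : Set (Set Ordinal)) : Prop :=
  (∀ A ∈ W, A ⊆ Set.Iio κ) ∧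
  (∀ A : Set Ordinal, A ⊆ Set.Iio κ → Xor' (A ∈ W) (Set.Iio κ \ A ∈ W)) ∧
  (∀ A ∈ W, ∀ B : Set Ordinal, B ⊆ Set.Iio κ → A ⊆ B → B ∈ W) ∧
  (∀ A ∈ W, ∀ B ∈ W, A ∩ B ∈ W)

/-- `f` is a super-Lipschitz reduction of `U` to `W`. -/
def IsSLReduction (κ : Ordinal) (f : Set Ordinal → Set Ordinal)
    (U W : Set (Set Ordinal)) : Prop :=
  SuperLipschitz κ f ∧
  (∀ A : Set Ordinal, A ⊆ Set.Iio κ → f A ⊆ Set.Iio κ) ∧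
  (∀ A : Set Ordinal, A ⊆ Set.Iio κ → (A ∈ U ↔ f A ∈ W))

/-- if `U, W` are ultrafilters on `κ`, `I ∈ W`, and `⟨U_ξ : ξ ∈ I⟩` is a family
with each `U_ξ` an ultrafilter on `P(ξ)` such that `X ∈ U ↔ {ξ ∈ I : X ∩ ξ ∈ U_ξ} ∈ W`
for all `X ⊆ κ`, then `f(X) = {ξ ∈ I : X ∩ ξ ∈ U_ξ}` is a super-Lipschitz reduction of
`U` to `W`; in particular `U` is super-Lipschitz reducible to `W`. -/
theorem ketonen_witness_gives_superLipschitz_reduction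
    (κ : Ordinal) (U W : Set (Set Ordinal)) (I : Set Ordinal)
    (hU : IsUltrafilterOn κ U) (hW : IsUltrafilterOn κ W) (hI : I ∈ W)
    (𝒰 : Ordinal → Set (Set Ordinal))
    (h𝒰 : ∀ ξ ∈ I, IsUltrafilterOn ξ (𝒰 ξ))
    (hker : ∀ X : Set Ordinal, X ⊆ Set.Iio κ →
      (X ∈ U ↔ {ξ | ξ ∈ I ∧ X ∩ Set.Iio ξ ∈ 𝒰 ξ} ∈ W)) :
    IsSLReduction κ (fun X => {ξ | ξ ∈ I ∧ X ∩ Set.Iio ξ ∈ 𝒰 ξ}) U W := by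
  refine ⟨?_, ?_, ?_⟩
  · intro ξ hξ A
    ext η
    simp only [Set.mem_inter_iff, Set.mem_setOf_eq, Set.mem_Iio]
    constructor
    · rintro ⟨⟨hI, hA⟩, hlt⟩
      refine ⟨⟨hI, ?_⟩, hlt⟩
      have : A ∩ Set.Iio ξ ∩ Set.Iio η = A ∩ Set.Iio η := by
        rw [Set.inter_assoc, Set.Iio_inter_Iio, min_eq_right (Order.lt_add_one_iff.mp hlt)]
      rwa [this]
    · rintro ⟨⟨hI, hA⟩, hlt⟩
      refine ⟨⟨hI, ?_⟩, hlt⟩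
      have : A ∩ Set.Iio ξ ∩ Set.Iio η = A ∩ Set.Iio η := by
        rw [Set.inter_assoc, Set.Iio_inter_Iio, min_eq_right (Order.lt_add_one_iff.mp hlt)]
      rwa [← this]
  · intro A hA ξ hξ
    exact hW.1 I hI hξ.1
  · intro A hA
    exact hker A hA
end

section
/- Suppose f : P(κ) → P(κ) is super-Lipschitz with f⁻¹[P(κ)\W] = U, where W is any subset of P(κ). Define a strategy for Player I in G_κ(W,U): at round i, having seen Player II's moves ⟨b(j) : j < i⟩, play a(i) = 1 if and only if i ∈ f({j < i : b(j) = 1}). Then this is a winning strategy for Player I: for any play ⟨a(i), b(i) : i < κ⟩ consistent with this strategy, {i : a(i)=1} ∈ W if and only if {j : b(j)=1} ∉ U. -/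
/-- suppose `f : P(κ) → P(κ)` is super-Lipschitz with `f⁻¹[P(κ)\W] = U`.
The strategy for Player I playing `a(i) = 1` iff `i ∈ f({j < i : b(j) = 1})` is winning:
for any play consistent with it, `{i : a(i)=1} ∈ W` iff `{j : b(j)=1} ∉ U`. -/
theorem reduction_gives_winning_strategy
    (κ : Ordinal) (U W : Set (Set Ordinal)) (f : Set Ordinal → Set Ordinal)
    (hf : SuperLipschitz κ f)
    (hrange : ∀ A : Set Ordinal, A ⊆ Set.Iio κ → f A ⊆ Set.Iio κ)
    (hred : ∀ A : Set Ordinal, A ⊆ Set.Iio κ →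
      (A ∈ U ↔ f A ∈ ({X | X ⊆ Set.Iio κ} \ W)))
    (a b : Ordinal → Bool)
    (hplay : ∀ i < κ, (a i = true ↔ i ∈ f {j | j < i ∧ b j = true})) :
    ({i | i < κ ∧ a i = true} ∈ W ↔ {j | j < κ ∧ b j = true} ∉ U) := by
  set B := {j | j < κ ∧ b j = true} with hB
  have hBsub : B ⊆ Set.Iio κ := fun j hj => hj.1
  have hfB : f B ⊆ Set.Iio κ := hrange B hBsub
  have hkey : ∀ i < κ, (i ∈ f B ↔ a i = true) := by
    intro i hi
    have h2 : B ∩ Set.Iio i = {j | j < i ∧ b j = true} := by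
      ext j
      simp only [hB, Set.mem_inter_iff, Set.mem_setOf_eq, Set.mem_Iio]
      exact ⟨fun ⟨⟨_, hbj⟩, hji⟩ => ⟨hji, hbj⟩,
        fun ⟨hji, hbj⟩ => ⟨⟨hji.trans hi, hbj⟩, hji⟩⟩
    have hlip := hf i hi B
    have hii : i < i + 1 := by
      rw [Ordinal.add_one_eq_succ]; exact Order.lt_succ i
    constructor
    · intro hmem
      have : i ∈ f (B ∩ Set.Iio i) ∩ Set.Iio (i + 1) := by
        rw [← hlip]; exact ⟨hmem, hii⟩
      exact (hplay i hi).mpr (by rw [← h2]; exact this.1)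
    · intro hai
      have h1 : i ∈ f (B ∩ Set.Iio i) := by rw [h2]; exact (hplay i hi).mp hai
      have : i ∈ f B ∩ Set.Iio (i + 1) := by rw [hlip]; exact ⟨h1, hii⟩
      exact this.1
  have hA : {i | i < κ ∧ a i = true} = f B := by
    ext i
    constructor
    · rintro ⟨hi, hai⟩; exact (hkey i hi).mpr hai
    · intro hi; exact ⟨hfB hi, (hkey i (hfB hi)).mp hi⟩
  have := hred B hBsub
  rw [Set.mem_diff, Set.mem_setOf_eq] at this
  rw [hA]
  constructor
  · intro hW hU; exact ((this.mp hU).2) hW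
  · intro hU
    by_contra hW
    exact hU (this.mpr ⟨hfB, hW⟩)
end
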